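/- arXiv:0903.3580 — 2 statements merged into one kernel-verified Lean document; each statement's English description precedes it below -/
import Mathlib

section
/- For ξ ∈ [0, π), the 2×2 matrix P_ξ = [[cos²ξ, sinξ cosξ],[sinξ cosξ, sin²ξ]] is ℓ∞-contractive (i.e., each row sum of absolute values is at most 1) if and only if ξ ∈ {0, π/4, π/2, 3π/4}. -/
open scoped BigOperators

/-- For `ξ ∈ [0,π)`, the matrix `P_ξ = [[cos²ξ, sinξ cosξ],[sinξ cosξ, sin²ξ]]` is
`ℓ∞`-contractive (each row sum of absolute values is at most 1) if and only if
`ξ ∈ {0, π/4, π/2, 3π/4}`. -/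
theorem proj_matrix_two_dim_linf_contractive_iff
    (ξ : ℝ) (hξ : ξ ∈ Set.Ico 0 Real.pi) :
    (∀ i, ∑ j, |(!![(Real.cos ξ)^2, Real.sin ξ * Real.cos ξ;
                    Real.sin ξ * Real.cos ξ, (Real.sin ξ)^2] : Matrix (Fin 2) (Fin 2) ℝ) i j| ≤ 1)
      ↔ ξ ∈ ({0, Real.pi / 4, Real.pi / 2, 3 * Real.pi / 4} : Set ℝ) := by
  obtain ⟨hξ0, hξπ⟩ := hξ
  have hpi := Real.pi_pos
  have pyth := Real.sin_sq_add_cos_sq ξ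
  constructor
  · intro h
    have h0 := h 0
    have h1 := h 1
    simp [Fin.sum_univ_two, abs_sq] at h0 h1
    have hsc : |Real.sin ξ| * |Real.cos ξ| = |Real.sin ξ * Real.cos ξ| := (abs_mul _ _).symm
    rcases eq_or_ne (Real.sin ξ) 0 with hs | hs
    · left
      rcases eq_or_lt_of_le hξ0 with h' | h'
      · exact h'.symm
      · exact absurd hs (ne_of_gt (Real.sin_pos_of_pos_of_lt_pi h' hξπ))
    rcases eq_or_ne (Real.cos ξ) 0 with hc | hc
    · right; right; left
      obtain ⟨k, hk⟩ := Real.cos_eq_zero_iff.mp hc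
      have hb1 : (0:ℝ) ≤ 2*(k:ℝ)+1 := by nlinarith
      have hb2 : 2*(k:ℝ)+1 < 3 := by nlinarith
      have hk0 : k = 0 := by
        have b1 : (0:ℤ) ≤ 2*k+1 := by exact_mod_cast hb1
        have b2 : 2*k+1 < 3 := by exact_mod_cast hb2
        omega
      rw [hk0] at hk; rw [hk]; push_cast; ring
    · have habs_s : 0 < |Real.sin ξ| := abs_pos.mpr hs
      have habs_c : 0 < |Real.cos ξ| := abs_pos.mpr hc
      have e1 : |Real.sin ξ * Real.cos ξ| ≤ (Real.sin ξ)^2 := by nlinarith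
      have e2 : |Real.sin ξ * Real.cos ξ| ≤ (Real.cos ξ)^2 := by nlinarith
      rw [← hsc] at e1 e2
      have hs2 : (Real.sin ξ)^2 = |Real.sin ξ|^2 := (sq_abs _).symm
      have hc2 : (Real.cos ξ)^2 = |Real.cos ξ|^2 := (sq_abs _).symm
      have heq : |Real.sin ξ| = |Real.cos ξ| := by nlinarith
      have hcos2 : Real.cos (2 * ξ) = 0 := by
        have h' : (Real.cos ξ)^2 = (Real.sin ξ)^2 := by rw [hs2, hc2, heq]
        nlinarith [Real.cos_two_mul ξ]
      obtain ⟨k, hk⟩ := Real.cos_eq_zero_iff.mp hcos2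
      have hb1 : (0:ℝ) ≤ 2*(k:ℝ)+1 := by nlinarith
      have hb2 : 2*(k:ℝ)+1 < 4 := by nlinarith
      have hk01 : k = 0 ∨ k = 1 := by
        have b1 : (0:ℤ) ≤ 2*k+1 := by exact_mod_cast hb1
        have b2 : 2*k+1 < 4 := by exact_mod_cast hb2
        omega
      rcases hk01 with hk0 | hk0 <;> rw [hk0] at hk <;> push_cast at hk <;> norm_num at hk
      · right; left
        show ξ = Real.pi / 4
        linarith
      · right; right; right
        show ξ = 3 * Real.pi / 4
        linarith
  · have h2 : (Real.sqrt 2)^2 = 2 := Real.sq_sqrt (by norm_num)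
    have h2' : (0:ℝ) ≤ Real.sqrt 2 := Real.sqrt_nonneg 2
    intro hmem
    rcases hmem with h | h | h | h <;> subst h <;> intro i <;> fin_cases i
    · simp
    · simp
    · simp [Fin.sum_univ_two, Real.sin_pi_div_four, Real.cos_pi_div_four, abs_sq, abs_mul,
        abs_of_nonneg (by positivity : (0:ℝ) ≤ Real.sqrt 2 / 2)]
      nlinarith
    · simp [Fin.sum_univ_two, Real.sin_pi_div_four, Real.cos_pi_div_four, abs_sq, abs_mul,
        abs_of_nonneg (by positivity : (0:ℝ) ≤ Real.sqrt 2 / 2)]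
      nlinarith
    · simp [Fin.sum_univ_two, Real.sin_pi_div_two, Real.cos_pi_div_two]
    · simp [Fin.sum_univ_two, Real.sin_pi_div_two, Real.cos_pi_div_two]
    all_goals
      rw [show (3:ℝ) * Real.pi / 4 = Real.pi - Real.pi/4 by ring]
      simp [Fin.sum_univ_two, Real.sin_pi_sub, Real.cos_pi_sub,
        Real.sin_pi_div_four, Real.cos_pi_div_four, abs_sq, abs_mul,
        abs_of_nonneg (by positivity : (0:ℝ) ≤ Real.sqrt 2 / 2)]
      nlinarith
end

section
/- Let H be a Hilbert space, S a bounded accretive operator on H (i.e., Re(Sx|x) ≥ 0 for all x), and C a closed convex subset of H with metric projection P_C. If Re(S P_C x | x − P_C x) ≥ 0 for all x ∈ H, then the semigroup (e^{−tS})_{t≥0} leaves C invariant; conversely if (e^{−tS})_{t≥0} leaves C invariant then Re(S P_C x | x − P_C x) ≥ 0 for all x ∈ H. (Finite-dimensional / bounded-operator version of Ouhabaz's invariance criterion.) -/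
open scoped InnerProductSpace
open NormedSpace

private lemma proj_char {F : Type*} [NormedAddCommGroup F] [InnerProductSpace ℝ F]
    {C : Set F} (hC_convex : Convex ℝ C) (P : F → F)
    (hP_mem : ∀ x, P x ∈ C) (hP_nearest : ∀ x, ∀ y ∈ C, ‖x - P x‖ ≤ ‖x - y‖) :
    ∀ x, ∀ y ∈ C, ⟪x - P x, y - P x⟫_ℝ ≤ 0 := by
  intro x
  have : Nonempty C := ⟨⟨P x, hP_mem x⟩⟩
  refine (norm_eq_iInf_iff_real_inner_le_zero hC_convex (hP_mem x)).1 ?_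
  refine le_antisymm (le_ciInf fun w => hP_nearest x w w.2) ?_
  have hb : BddBelow (Set.range fun w : C => ‖x - (w : F)‖) :=
    ⟨0, by rintro r ⟨w, rfl⟩; exact norm_nonneg _⟩
  exact ciInf_le hb ⟨P x, hP_mem x⟩

private lemma proj_lip {F : Type*} [NormedAddCommGroup F] [InnerProductSpace ℝ F]
    {C : Set F} (hC_convex : Convex ℝ C) (P : F → F)
    (hP_mem : ∀ x, P x ∈ C) (hP_nearest : ∀ x, ∀ y ∈ C, ‖x - P x‖ ≤ ‖x - y‖) :
    ∀ x y, ‖P x - P y‖ ≤ ‖x - y‖ := by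
  intro x y
  have h1 := proj_char hC_convex P hP_mem hP_nearest x (P y) (hP_mem y)
  have h2 := proj_char hC_convex P hP_mem hP_nearest y (P x) (hP_mem x)
  have key : ‖P x - P y‖ ^ 2 ≤ ⟪x - y, P x - P y⟫_ℝ := by
    have e : ⟪x - y, P x - P y⟫_ℝ - ‖P x - P y‖ ^ 2
        = -⟪x - P x, P y - P x⟫_ℝ - ⟪y - P y, P x - P y⟫_ℝ := by
      rw [← real_inner_self_eq_norm_sq]
      simp only [inner_sub_left, inner_sub_right]
      have c1 := real_inner_comm x (P x)
      have c2 := real_inner_comm x (P y)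
      have c3 := real_inner_comm y (P x)
      have c4 := real_inner_comm y (P y)
      have c5 := real_inner_comm (P x) (P y)
      linarith
    linarith
  have h3 := real_inner_le_norm (x - y) (P x - P y)
  nlinarith [norm_nonneg (P x - P y), norm_nonneg (x - y)]

private lemma proj_sq_fderiv {F : Type*} [NormedAddCommGroup F] [InnerProductSpace ℝ F]
    {C : Set F} (P : F → F)
    (hP_mem : ∀ x, P x ∈ C) (hP_nearest : ∀ x, ∀ y ∈ C, ‖x - P x‖ ≤ ‖x - y‖)
    (hlip : ∀ x y, ‖P x - P y‖ ≤ ‖x - y‖) (x : F) :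
    HasFDerivAt (fun y => ‖y - P y‖ ^ 2) ((2 : ℝ) • innerSL ℝ (x - P x)) x := by
  rw [hasFDerivAt_iff_isLittleO_nhds_zero]
  have bound : ∀ h : F,
      ‖(‖x + h - P (x + h)‖ ^ 2 - ‖x - P x‖ ^ 2 - ((2 : ℝ) • innerSL ℝ (x - P x)) h)‖
        ≤ 5 * ‖h‖ ^ 2 := by
    intro h
    set q := P x with hq
    set r := P (x + h) with hr
    have happ : ((2 : ℝ) • innerSL ℝ (x - q)) h = 2 * ⟪x - q, h⟫_ℝ := by
      simp [inner_sub_left]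
    have e1 : ‖x + h - q‖ ^ 2 = ‖x - q‖ ^ 2 + 2 * ⟪x - q, h⟫_ℝ + ‖h‖ ^ 2 := by
      have := norm_add_sq_real (x - q) h
      have hev : x + h - q = x - q + h := by abel
      rw [hev]; linarith
    have e2 : ‖x - r‖ ^ 2 = ‖x + h - r‖ ^ 2 - 2 * ⟪x + h - r, h⟫_ℝ + ‖h‖ ^ 2 := by
      have := norm_sub_sq_real (x + h - r) h
      have hev : x - r = x + h - r - h := by abel
      rw [hev]; linarith
    have hup : ‖x + h - r‖ ^ 2 ≤ ‖x + h - q‖ ^ 2 := by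
      have := hP_nearest (x + h) q (hP_mem x)
      have h0 : (0:ℝ) ≤ ‖x + h - r‖ := norm_nonneg _
      nlinarith
    have hlo : ‖x - q‖ ^ 2 ≤ ‖x - r‖ ^ 2 := by
      have := hP_nearest x r (hP_mem (x + h))
      have h0 : (0:ℝ) ≤ ‖x - q‖ := norm_nonneg _
      nlinarith
    have hcross : |⟪x + h - r, h⟫_ℝ - ⟪x - q, h⟫_ℝ| ≤ 2 * ‖h‖ ^ 2 := by
      have hsub : ⟪x + h - r, h⟫_ℝ - ⟪x - q, h⟫_ℝ = ⟪(x + h - r) - (x - q), h⟫_ℝ := by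
        simp [inner_sub_left, inner_add_left]
      rw [hsub]
      have h1 : |⟪(x + h - r) - (x - q), h⟫_ℝ| ≤ ‖(x + h - r) - (x - q)‖ * ‖h‖ :=
        abs_real_inner_le_norm _ _
      have h2 : ‖(x + h - r) - (x - q)‖ ≤ ‖h‖ + ‖q - r‖ := by
        have hev : (x + h - r) - (x - q) = h + (q - r) := by abel
        rw [hev]; exact norm_add_le _ _
      have h3 : ‖q - r‖ ≤ ‖h‖ := by
        have := hlip x (x + h)
        have hev : x - (x + h) = -h := by abel
        rw [hev, norm_neg] at this
        exact this
      have h0 : (0:ℝ) ≤ ‖h‖ := norm_nonneg _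
      nlinarith
    rw [happ, Real.norm_eq_abs, abs_le]
    rcases abs_le.1 hcross with ⟨hc1, hc2⟩
    constructor <;> nlinarith [sq_nonneg ‖h‖]
  rw [Asymptotics.isLittleO_iff]
  intro c hc
  filter_upwards [Metric.ball_mem_nhds (0 : F) (show (0:ℝ) < c / 5 by positivity)] with h hh
  have hh' : ‖h‖ < c / 5 := by simpa using mem_ball_zero_iff.1 hh
  calc ‖(‖x + h - P (x + h)‖ ^ 2 - ‖x - P x‖ ^ 2 - ((2 : ℝ) • innerSL ℝ (x - P x)) h)‖
      ≤ 5 * ‖h‖ ^ 2 := bound h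
    _ ≤ c * ‖h‖ := by nlinarith [norm_nonneg h]
private lemma orbit_hasDerivAt {H : Type*} [NormedAddCommGroup H] [InnerProductSpace ℂ H]
    [CompleteSpace H] (S : H →L[ℂ] H) (x₀ : H) (t : ℝ) :
    HasDerivAt (fun s : ℝ => (exp ((-s) • S)) x₀) (-(S ((exp ((-t) • S)) x₀))) t := by
  have h1 : HasDerivAt (fun s : ℝ => exp (s • S)) (exp ((-t) • S) * S) (-t) :=
    hasDerivAt_exp_smul_const S (-t)
  have hneg : HasDerivAt (fun s : ℝ => -s) (-1 : ℝ) t := (hasDerivAt_id t).neg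
  have h2 : HasDerivAt (fun s : ℝ => exp ((-s) • S)) ((-1 : ℝ) • (exp ((-t) • S) * S)) t :=
    h1.scomp t hneg
  have h3 := ((ContinuousLinearMap.apply ℂ H x₀).restrictScalars ℝ).hasFDerivAt.comp_hasDerivAt t h2
  have hc : Commute S (exp ((-t) • S)) := ((Commute.refl S).smul_right (-t : ℝ)).exp_right
  have h4 : ((ContinuousLinearMap.apply ℂ H x₀).restrictScalars ℝ)
      ((-1 : ℝ) • (exp ((-t) • S) * S)) = -(S ((exp ((-t) • S)) x₀)) := by
    have hmul : (exp ((-t) • S) * S) x₀ = S ((exp ((-t) • S)) x₀) := by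
      rw [← hc.eq]
      rfl
    have e0 : ((ContinuousLinearMap.apply ℂ H x₀).restrictScalars ℝ)
        ((-1 : ℝ) • (exp ((-t) • S) * S)) = ((-1 : ℝ) • (exp ((-t) • S) * S)) x₀ := rfl
    rw [e0, ContinuousLinearMap.smul_apply, ContinuousLinearMap.mul_apply] at *
    rw [← hmul, neg_one_smul]
  rw [h4] at h3
  exact h3

/-- Ouhabaz's invariance criterion (bounded-operator version): for a bounded accretive
operator `S` on a Hilbert space and a nonempty closed convex set `C` with nearest-point
projection `P`, the semigroup `(e^{-tS})_{t≥0}` leaves `C` invariant if and only if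
`Re (S(Px) | x - Px) ≥ 0` for all `x`. -/
theorem ouhabaz_invariance_criterion_bounded
    {H : Type*} [NormedAddCommGroup H] [InnerProductSpace ℂ H] [CompleteSpace H]
    (S : H →L[ℂ] H)
    (haccr : ∀ x : H, 0 ≤ (inner ℂ (S x) x : ℂ).re)
    (C : Set H) (hC_ne : C.Nonempty) (hC_closed : IsClosed C) (hC_convex : Convex ℝ C)
    (P : H → H)
    (hP_mem : ∀ x, P x ∈ C)
    (hP_nearest : ∀ x, ∀ y ∈ C, ‖x - P x‖ ≤ ‖x - y‖) :
    (∀ t : ℝ, 0 ≤ t → ∀ x ∈ C, (NormedSpace.exp ((-t) • S)) x ∈ C)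
      ↔ ∀ x : H, 0 ≤ (inner ℂ (S (P x)) (x - P x) : ℂ).re := by
  letI : InnerProductSpace ℝ H := InnerProductSpace.complexToReal
  have hre : ∀ a b : H, ⟪a, b⟫_ℝ = (inner ℂ a b : ℂ).re := fun a b => rfl
  have hlip := proj_lip hC_convex P hP_mem hP_nearest
  constructor
  · -- invariance → inequality
    intro hinv x
    set u : ℝ → H := fun s => (NormedSpace.exp ((-s) • S)) (P x) with hu
    have hu0 : u 0 = P x := by simp [hu]
    set f : ℝ → ℝ := fun s => ‖u s - x‖ ^ 2 with hf
    have hud : HasDerivAt u (-(S (P x))) 0 := by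
      have h0 := orbit_hasDerivAt S (P x) 0
      have e : (NormedSpace.exp ((-(0:ℝ)) • S)) (P x) = P x := by
        norm_num [NormedSpace.exp_zero]
      rw [e] at h0
      exact h0
    have hfd : HasDerivAt f (((2 : ℝ) • innerSL ℝ (u 0 - x)) (-(S (P x)))) 0 := by
      have hg := proj_sq_fderiv (C := ({x} : Set H)) (fun _ => x)
        (fun _ => Set.mem_singleton x)
        (fun z y hy => by rw [Set.mem_singleton_iff.1 hy])
        (fun a b => by simp) (u 0)
      exact hg.comp_hasDerivAt 0 hud
    have hval : ((2 : ℝ) • innerSL ℝ (u 0 - x)) (-(S (P x)))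
        = 2 * ⟪P x - x, -(S (P x))⟫_ℝ := by
      rw [hu0]; simp [inner_sub_left]; ring
    have hmin : ∀ s : ℝ, 0 ≤ s → f 0 ≤ f s := by
      intro s hs
      have hmem : u s ∈ C := hinv s hs (P x) (hP_mem x)
      have h1 : ‖x - P x‖ ≤ ‖x - u s‖ := hP_nearest x (u s) hmem
      have e0 : f 0 = ‖x - P x‖ ^ 2 := by rw [hf]; simp only [hu0]; rw [norm_sub_rev]
      have e1 : f s = ‖x - u s‖ ^ 2 := by rw [hf]; rw [norm_sub_rev]
      rw [e0, e1]
      nlinarith [norm_nonneg (x - P x)]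
    rw [hval] at hfd
    have hslope : 0 ≤ 2 * ⟪P x - x, -(S (P x))⟫_ℝ := by
      have h1 := hasDerivAt_iff_tendsto_slope.1 hfd
      have h2 : Filter.Tendsto (slope f 0) (nhdsWithin 0 (Set.Ioi 0))
          (nhds (2 * ⟪P x - x, -(S (P x))⟫_ℝ)) :=
        h1.mono_left (nhdsWithin_mono 0 fun s hs =>
          Set.mem_compl_singleton_iff.2 (ne_of_gt hs))
      refine ge_of_tendsto h2 ?_
      filter_upwards [self_mem_nhdsWithin] with s hs
      have hs' : (0 : ℝ) < s := hs
      rw [slope_def_field]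
      exact div_nonneg (sub_nonneg.2 (hmin s hs'.le)) (by linarith)
    have hkey : 0 ≤ ⟪x - P x, S (P x)⟫_ℝ := by
      have e : ⟪P x - x, -(S (P x))⟫_ℝ = ⟪x - P x, S (P x)⟫_ℝ := by
        rw [inner_neg_right, ← inner_neg_left]
        congr 1
        abel
      rw [e] at hslope
      linarith
    have e2 : (inner ℂ (S (P x)) (x - P x) : ℂ).re = ⟪S (P x), x - P x⟫_ℝ := (hre _ _).symm
    rw [e2, real_inner_comm]
    exact hkey
  · -- inequality → invariance
    intro hineq t ht x₀ hx₀
    set u : ℝ → H := fun s => (NormedSpace.exp ((-s) • S)) x₀ with hu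
    have hu0 : u 0 = x₀ := by simp [hu]
    set φ : ℝ → ℝ := fun s => ‖u s - P (u s)‖ ^ 2 with hφdef
    have hd : ∀ s : ℝ, HasDerivAt φ (((2 : ℝ) • innerSL ℝ (u s - P (u s))) (-(S (u s)))) s := by
      intro s
      have hg := proj_sq_fderiv P hP_mem hP_nearest hlip (u s)
      exact hg.comp_hasDerivAt s (orbit_hasDerivAt S x₀ s)
    have hnonpos : ∀ s, ((2 : ℝ) • innerSL ℝ (u s - P (u s))) (-(S (u s))) ≤ 0 := by
      intro s
      have hval : ((2 : ℝ) • innerSL ℝ (u s - P (u s))) (-(S (u s)))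
          = 2 * ⟪u s - P (u s), -(S (u s))⟫_ℝ := by
        simp [inner_sub_left]; ring
      rw [hval]
      have hsum : ⟪u s - P (u s), S (u s)⟫_ℝ
          = ⟪u s - P (u s), S (u s - P (u s))⟫_ℝ + ⟪u s - P (u s), S (P (u s))⟫_ℝ := by
        rw [← inner_add_right]
        congr 1
        rw [map_sub]
        abel
      have h1 : 0 ≤ ⟪u s - P (u s), S (u s - P (u s))⟫_ℝ := by
        rw [real_inner_comm, hre]; exact haccr _
      have h2 : 0 ≤ ⟪u s - P (u s), S (P (u s))⟫_ℝ := by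
        rw [real_inner_comm, hre]; exact hineq (u s)
      rw [inner_neg_right]
      linarith
    have hanti : Antitone φ := antitone_of_deriv_nonpos
      (fun s => (hd s).differentiableAt)
      (fun s => by rw [(hd s).deriv]; exact hnonpos s)
    have hφ0 : φ 0 = 0 := by
      have hPx₀ : P x₀ = x₀ := by
        have h1 := hP_nearest x₀ x₀ hx₀
        rw [sub_self, norm_zero] at h1
        have h2 : ‖x₀ - P x₀‖ = 0 := le_antisymm h1 (norm_nonneg _)
        rw [norm_eq_zero, sub_eq_zero] at h2
        exact h2.symm
      simp [hφdef, hu0, hPx₀]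
    have h1 : φ t ≤ 0 := hφ0 ▸ hanti ht
    have h2 : (0 : ℝ) ≤ φ t := sq_nonneg _
    have h3 : ‖u t - P (u t)‖ ^ 2 = 0 := le_antisymm h1 h2
    have h4 : u t = P (u t) := by
      have h5 := pow_eq_zero_iff (n := 2) (by norm_num) |>.1 h3
      rwa [norm_eq_zero, sub_eq_zero] at h5
    show u t ∈ C
    rw [h4]
    exact hP_mem (u t)
end
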